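/- Let η, P, r_B, r_E, σ² be positive reals with equal noise variances σ_B² = σ_E² = σ². If r_B < r_E, then the function f(R) = log₂( ((ηP + r_B²σ²)(ηR + r_E²σ²)) / ((ηP + r_E²σ²)(ηR + r_B²σ²)) ) attains its maximum over R ∈ [0, P] at R = 0, i.e., the optimal strategy allocates zero power to artificial noise. -/
import Mathlib


/-- With equal noise variances, if Bob is closer than Eve then it is optimal to
allocate no power to artificial noise. -/
theorem no_AN_optimal_when_Bob_closer (η P rB rE σ2 : ℝ)
    (hη : 0 < η) (hP : 0 < P) (hrB : 0 < rB) (hrE : 0 < rE) (hσ : 0 < σ2)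
    (hlt : rB < rE)
    (f : ℝ → ℝ)
    (hf : ∀ R, f R = Real.logb 2
      (((η * P + rB ^ 2 * σ2) * (η * R + rE ^ 2 * σ2)) /
       ((η * P + rE ^ 2 * σ2) * (η * R + rB ^ 2 * σ2)))) :
    ∀ R ∈ Set.Icc (0 : ℝ) P, f R ≤ f 0 := by
  intro R hR
  obtain ⟨hR0, hRP⟩ := hR
  rw [hf R, hf 0]
  have hB : 0 < rB ^ 2 * σ2 := by positivity
  have hE : 0 < rE ^ 2 * σ2 := by positivity
  have h1 : 0 < η * P + rB ^ 2 * σ2 := by positivity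
  have h2 : 0 < η * P + rE ^ 2 * σ2 := by positivity
  have h3 : 0 < η * R + rB ^ 2 * σ2 := by positivity
  have h4 : 0 < η * R + rE ^ 2 * σ2 := by positivity
  have hsq : rB ^ 2 ≤ rE ^ 2 := by nlinarith
  have hBE : rB ^ 2 * σ2 ≤ rE ^ 2 * σ2 := mul_le_mul_of_nonneg_right hsq hσ.le
  apply Real.logb_le_logb_of_le one_lt_two (by positivity)
  rw [mul_zero, zero_add, div_le_div_iff₀ (by positivity) (by positivity)]
  nlinarith [mul_nonneg (mul_nonneg hη.le hR0) (sub_nonneg.2 hBE),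
    mul_pos h1 h2]
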